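/- Let n ≥ 3 be an integer, let f : ℝ → ℝ be continuously differentiable, and let F(u) = ∫₀ᵘ f(t) dt. Let u ∈ C²([0,1]) satisfy u''(r) + ((n-1)/r) u'(r) + f(u(r)) = 0 for 0 < r < 1, with u'(0) = u(1) = 0. Then ∫₀¹ [ 2n F(u(r)) + (2−n) u(r) f(u(r)) ] r^{n-1} dr = (u'(1))². -/

import Mathlib

open Set Real

/-- The classical radial Pohozhaev identity (case `ψ(r) = r`):
`∫₀¹ [2n F(u) + (2-n) u f(u)] r^{n-1} dr = u'(1)²`. -/
theorem classical_pohozhaev_radial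
    (n : ℕ) (hn : 3 ≤ n)
    (f : ℝ → ℝ) (hf : ContDiff ℝ 1 f)
    (F : ℝ → ℝ) (hF : ∀ x : ℝ, F x = ∫ t in (0:ℝ)..x, f t)
    (u u' u'' : ℝ → ℝ)
    (hu : ∀ r ∈ Icc (0:ℝ) 1, HasDerivAt u (u' r) r)
    (hu' : ∀ r ∈ Icc (0:ℝ) 1, HasDerivAt u' (u'' r) r)
    (hu''c : ContinuousOn u'' (Icc (0:ℝ) 1))
    (hode : ∀ r ∈ Ioo (0:ℝ) 1, u'' r + ((n : ℝ) - 1) / r * u' r + f (u r) = 0)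
    (hbc0 : u' 0 = 0) (hbc1 : u 1 = 0) :
    ∫ r in (0:ℝ)..1,
        (2 * (n : ℝ) * F (u r) + (2 - (n : ℝ)) * u r * f (u r)) * r ^ (n - 1)
      = (u' 1) ^ 2 := by
  have hfc : Continuous f := hf.continuous
  -- F has derivative f
  have hFd : ∀ x : ℝ, HasDerivAt F (f x) x := by
    intro x
    have h := intervalIntegral.integral_hasDerivAt_right
      (hfc.intervalIntegrable 0 x)
      (hfc.stronglyMeasurable.stronglyMeasurableAtFilter) hfc.continuousAt
    rw [show F = (fun y : ℝ => ∫ t in (0:ℝ)..y, f t) from funext hF]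
    exact h
  have hFc : Continuous F := by
    apply continuous_iff_continuousAt.mpr
    exact fun x => (hFd x).continuousAt
  set G : ℝ → ℝ := fun x =>
    x ^ n * (u' x) ^ 2 + 2 * (x ^ n * F (u x)) + ((n : ℝ) - 2) * (x ^ (n-1) * (u x * u' x))
    with hG
  have cu : ContinuousOn u (Icc (0:ℝ) 1) :=
    fun r hr => (hu r hr).continuousAt.continuousWithinAt
  have cu' : ContinuousOn u' (Icc (0:ℝ) 1) :=
    fun r hr => (hu' r hr).continuousAt.continuousWithinAt
  have cG : ContinuousOn G (Icc (0:ℝ) 1) := by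
    apply ContinuousOn.add
    apply ContinuousOn.add
    · exact ((continuous_pow n).continuousOn).mul (cu'.pow 2)
    · exact (continuousOn_const).mul (((continuous_pow n).continuousOn).mul
        (hFc.comp_continuousOn cu))
    · exact (continuousOn_const).mul (((continuous_pow (n-1)).continuousOn).mul
        (cu.mul cu'))
  have cInt : ContinuousOn (fun r : ℝ =>
      (2 * (n : ℝ) * F (u r) + (2 - (n : ℝ)) * u r * f (u r)) * r ^ (n - 1))
      (Icc (0:ℝ) 1) := by
    apply ContinuousOn.mul _ ((continuous_pow (n-1)).continuousOn)
    apply ContinuousOn.add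
    · exact continuousOn_const.mul (hFc.comp_continuousOn cu)
    · exact (continuousOn_const.mul cu).mul (hfc.comp_continuousOn cu)
  have hint : IntervalIntegrable (fun r : ℝ =>
      (2 * (n : ℝ) * F (u r) + (2 - (n : ℝ)) * u r * f (u r)) * r ^ (n - 1))
      MeasureTheory.volume 0 1 := by
    apply ContinuousOn.intervalIntegrable
    rwa [uIcc_of_le (by norm_num : (0:ℝ) ≤ 1)]
  have hderiv : ∀ r ∈ Ioo (0:ℝ) 1, HasDerivAt G
      ((2 * (n : ℝ) * F (u r) + (2 - (n : ℝ)) * u r * f (u r)) * r ^ (n - 1)) r := by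
    intro r hr
    have hrI : r ∈ Icc (0:ℝ) 1 := Ioo_subset_Icc_self hr
    have hr0 : r ≠ 0 := ne_of_gt hr.1
    have h2 := hu r hrI
    have h3 := hu' r hrI
    have hode' : u'' r = -(((n:ℝ) - 1) / r * u' r) - f (u r) := by
      have := hode r hr; linarith
    have d1 : HasDerivAt (fun x : ℝ => x ^ n * (u' x) ^ 2)
        ((n : ℝ) * r ^ (n-1) * (u' r) ^ 2 + r ^ n * ((2:ℕ) * u' r ^ (2-1) * u'' r)) r :=
      (hasDerivAt_pow n r).mul (h3.pow 2)
    have d2 : HasDerivAt (fun x : ℝ => F (u x)) (f (u r) * u' r) r :=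
      (hFd (u r)).comp r h2
    have d2' : HasDerivAt (fun x : ℝ => x ^ n * F (u x))
        ((n : ℝ) * r ^ (n-1) * F (u r) + r ^ n * (f (u r) * u' r)) r :=
      (hasDerivAt_pow n r).mul d2
    have d3 : HasDerivAt (fun x : ℝ => u x * u' x) (u' r * u' r + u r * u'' r) r :=
      h2.mul h3
    have d3' : HasDerivAt (fun x : ℝ => x ^ (n-1) * (u x * u' x))
        (((n-1 : ℕ) : ℝ) * r ^ (n-1-1) * (u r * u' r)
          + r ^ (n-1) * (u' r * u' r + u r * u'' r)) r :=
      (hasDerivAt_pow (n-1) r).mul d3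
    have dG := ((d1.add (d2'.const_mul (2:ℝ))).add (d3'.const_mul ((n:ℝ) - 2)))
    convert dG using 1
    · rfl
    · rfl
    · rfl
    have e1 : r ^ n = r ^ (n-1) * r := by
      rw [← pow_succ]; congr 1; omega
    have e2 : r ^ (n-1) = r ^ (n-2) * r := by
      rw [← pow_succ]; congr 1; omega
    have e3 : (n:ℝ) - 1 ≠ 0 := by
      have : (3:ℝ) ≤ (n:ℝ) := by exact_mod_cast hn
      linarith
    have c1 : ((n-1 : ℕ) : ℝ) = (n:ℝ) - 1 := by
      push_cast [Nat.cast_sub (by omega : 1 ≤ n)]; ring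
    have c2 : n - 1 - 1 = n - 2 := by omega
    rw [hode', c1, c2, e1, e2]
    field_simp
    ring
  have key : (∫ r in (0:ℝ)..1,
      (2 * (n : ℝ) * F (u r) + (2 - (n : ℝ)) * u r * f (u r)) * r ^ (n - 1))
      = G 1 - G 0 := by
    apply intervalIntegral.integral_eq_sub_of_hasDeriv_right_of_le (by norm_num) cG
      (fun r hr => (hderiv r hr).hasDerivWithinAt) hint
  rw [key]
  have hF0 : F 0 = 0 := by rw [hF]; simp
  have hn0 : n ≠ 0 := by omega
  have hn1 : n - 1 ≠ 0 := by omega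
  simp [hG, hbc1, hF0, zero_pow hn0, zero_pow hn1]
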